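/- Let μ be a real number with μ > 0 and μ ≠ 1, let r > 0, and let f₁, g₁ be holomorphic on the ball B(0, r) ⊆ ℂ with f₁(0) = g₁(0) = 1 and g₁′(0) = ((μ−1)/(μ+1))²·f₁′(0). Set Z = ((μ²−1)/(4μ))·f₁′(0) and K = (1+μ)²·(μ²−1)/(16μ²). Define, for z ∈ B(0, r) with z ≠ 0 and z not in the nonpositive real axis, C(z) = ((μ²−1)/(4μ))·z^{(−1−μ)/2}·f₁(z) and D(z) = ((1+μ)²/(4μ))·z^{(μ−1)/2}·g₁(z), where z^a denotes the principal complex power. Then (z²·(D(z)·C′(z) − C(z)·D′(z)) + μ·K)/z tends to (1 − μ²)·Z/2 as z tends to 0 within the complement of the nonpositive real axis. (Equivalently, D·C′ − C·D′ is meromorphic at 0 with a pole of order at most 2, with coefficient −μK in z^{−2}, and the residue at 0 of the one-form D dC − C dD equals (1 − μ²)·Z/2.) -/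

import Mathlib

open Complex Filter

set_option maxHeartbeats 1600000 in
theorem stmt10 (μ : ℝ) (hμ : 0 < μ) (hμ1 : μ ≠ 1) (r : ℝ) (hr : 0 < r)
    (f₁ g₁ : ℂ → ℂ)
    (hf₁ : DifferentiableOn ℂ f₁ (Metric.ball 0 r))
    (hg₁ : DifferentiableOn ℂ g₁ (Metric.ball 0 r))
    (hf₁0 : f₁ 0 = 1) (hg₁0 : g₁ 0 = 1)
    (hg₁' : deriv g₁ 0 = ((((μ : ℂ) - 1) / ((μ : ℂ) + 1)) ^ 2) * deriv f₁ 0)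
    (Z K : ℂ)
    (hZ : Z = (((μ : ℂ) ^ 2 - 1) / (4 * (μ : ℂ))) * deriv f₁ 0)
    (hK : K = ((1 + (μ : ℂ)) ^ 2 * ((μ : ℂ) ^ 2 - 1)) / (16 * (μ : ℂ) ^ 2))
    (C D : ℂ → ℂ)
    (hC : ∀ z, C z = (((μ : ℂ) ^ 2 - 1) / (4 * (μ : ℂ))) * z ^ (((-1 - (μ : ℂ)) / 2) : ℂ) * f₁ z)
    (hD : ∀ z, D z = (((1 + (μ : ℂ)) ^ 2) / (4 * (μ : ℂ))) * z ^ ((((μ : ℂ) - 1) / 2) : ℂ) * g₁ z) :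
    Filter.Tendsto
      (fun z : ℂ => (z ^ 2 * (D z * deriv C z - C z * deriv D z) + (μ : ℂ) * K) / z)
      (nhdsWithin 0 Complex.slitPlane)
      (nhds ((1 - (μ : ℂ) ^ 2) * Z / 2)) := by
  have hμ0 : (μ : ℂ) ≠ 0 := Complex.ofReal_ne_zero.mpr (ne_of_gt hμ)
  have hμ1c : (μ : ℂ) + 1 ≠ 0 := by
    have : ((μ + 1 : ℝ) : ℂ) ≠ 0 := Complex.ofReal_ne_zero.mpr (by linarith)
    push_cast at this; exact this
  have h0ball : (0 : ℂ) ∈ Metric.ball (0 : ℂ) r := Metric.mem_ball_self hr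
  set a : ℂ := (-1 - (μ : ℂ)) / 2 with ha
  set b : ℂ := ((μ : ℂ) - 1) / 2 with hb
  set c₁ : ℂ := ((μ : ℂ) ^ 2 - 1) / (4 * (μ : ℂ)) with hc₁
  set c₂ : ℂ := (1 + (μ : ℂ)) ^ 2 / (4 * (μ : ℂ)) with hc₂
  have hfa : AnalyticOnNhd ℂ f₁ (Metric.ball 0 r) := hf₁.analyticOnNhd Metric.isOpen_ball
  have hga : AnalyticOnNhd ℂ g₁ (Metric.ball 0 r) := hg₁.analyticOnNhd Metric.isOpen_ball
  have hdf : ContinuousAt (deriv f₁) 0 := (hfa.deriv 0 h0ball).continuousAt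
  have hdg : ContinuousAt (deriv g₁) 0 := (hga.deriv 0 h0ball).continuousAt
  have hf0 : HasDerivAt f₁ (deriv f₁ 0) 0 :=
    (hf₁.differentiableAt (Metric.isOpen_ball.mem_nhds h0ball)).hasDerivAt
  have hg0 : HasDerivAt g₁ (deriv g₁ 0) 0 :=
    (hg₁.differentiableAt (Metric.isOpen_ball.mem_nhds h0ball)).hasDerivAt
  -- limit of (f₁ g₁ - 1)/z
  have hprod : HasDerivAt (fun z => f₁ z * g₁ z) (deriv f₁ 0 + deriv g₁ 0) 0 := by
    have := hf0.fun_mul hg0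
    simpa only [hf₁0, hg₁0, mul_one, one_mul] using this
  have hT1 : Tendsto (fun z : ℂ => (f₁ z * g₁ z - 1) / z) (nhdsWithin 0 Complex.slitPlane)
      (nhds (deriv f₁ 0 + deriv g₁ 0)) := by
    have h := hasDerivAt_iff_tendsto_slope.mp hprod
    have hle : nhdsWithin (0:ℂ) Complex.slitPlane ≤ nhdsWithin 0 {(0:ℂ)}ᶜ :=
      nhdsWithin_mono 0 (fun z hz => Complex.slitPlane_ne_zero hz)
    have h2 := h.mono_left hle
    refine h2.congr' ?_
    filter_upwards [eventually_mem_nhdsWithin] with z hz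
    simp [slope_def_field, hf₁0, hg₁0, div_eq_div_iff]
  have hT2 : Tendsto (fun z : ℂ => deriv f₁ z * g₁ z - f₁ z * deriv g₁ z)
      (nhdsWithin 0 Complex.slitPlane)
      (nhds (deriv f₁ 0 - deriv g₁ 0)) := by
    have : ContinuousAt (fun z : ℂ => deriv f₁ z * g₁ z - f₁ z * deriv g₁ z) 0 :=
      (hdf.mul hg0.continuousAt).sub (hf0.continuousAt.mul hdg)
    have h3 := this.tendsto.mono_left (nhdsWithin_le_nhds (s := Complex.slitPlane))
    simpa [hf₁0, hg₁0] using h3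
  have hTfull : Tendsto (fun z : ℂ =>
      (μ : ℂ) * K * (-((f₁ z * g₁ z - 1) / z)) + K * (deriv f₁ z * g₁ z - f₁ z * deriv g₁ z))
      (nhdsWithin 0 Complex.slitPlane)
      (nhds ((μ : ℂ) * K * (-(deriv f₁ 0 + deriv g₁ 0)) + K * (deriv f₁ 0 - deriv g₁ 0))) :=
    ((hT1.neg.const_mul _).add (hT2.const_mul _))
  have hLeq : (μ : ℂ) * K * (-(deriv f₁ 0 + deriv g₁ 0)) + K * (deriv f₁ 0 - deriv g₁ 0)
      = (1 - (μ : ℂ) ^ 2) * Z / 2 := by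
    rw [hg₁', hZ, hK, hc₁]
    field_simp
    ring
  rw [← hLeq]
  refine hTfull.congr' ?_
  -- eventual equality
  have hball : ∀ᶠ z in nhdsWithin (0:ℂ) Complex.slitPlane, z ∈ Metric.ball (0:ℂ) r :=
    eventually_nhdsWithin_of_eventually_nhds
      (Metric.isOpen_ball.eventually_mem h0ball)
  filter_upwards [hball, eventually_mem_nhdsWithin] with z hzb hzs
  have hz0 : z ≠ 0 := Complex.slitPlane_ne_zero hzs
  have hfz : HasDerivAt f₁ (deriv f₁ z) z :=
    (hf₁.differentiableAt (Metric.isOpen_ball.mem_nhds hzb)).hasDerivAt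
  have hgz : HasDerivAt g₁ (deriv g₁ z) z :=
    (hg₁.differentiableAt (Metric.isOpen_ball.mem_nhds hzb)).hasDerivAt
  have hCfun : C = fun z => c₁ * z ^ a * f₁ z := funext hC
  have hDfun : D = fun z => c₂ * z ^ b * g₁ z := funext hD
  have hpa : HasDerivAt (fun z : ℂ => z ^ a) (a * z ^ (a - 1)) z :=
    (Complex.hasStrictDerivAt_cpow_const hzs).hasDerivAt
  have hpb : HasDerivAt (fun z : ℂ => z ^ b) (b * z ^ (b - 1)) z :=
    (Complex.hasStrictDerivAt_cpow_const hzs).hasDerivAt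
  have hCz : deriv C z = c₁ * (a * z ^ (a - 1)) * f₁ z + c₁ * z ^ a * deriv f₁ z := by
    rw [hCfun]
    exact (((hpa.const_mul c₁).mul hfz).deriv)
  have hDz : deriv D z = c₂ * (b * z ^ (b - 1)) * g₁ z + c₂ * z ^ b * deriv g₁ z := by
    rw [hDfun]
    exact (((hpb.const_mul c₂).mul hgz).deriv)
  -- power identities
  have hm2 : z ^ (-2 : ℂ) * z ^ 2 = 1 := by
    rw [show ((-2 : ℂ)) = -((2 : ℕ) : ℂ) by norm_num, Complex.cpow_neg, Complex.cpow_natCast]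
    exact inv_mul_cancel₀ (pow_ne_zero 2 hz0)
  have h3 : z ^ a * z ^ b * z = 1 := by
    rw [← Complex.cpow_add _ _ hz0, show a + b = (-1 : ℂ) by rw [ha, hb]; ring,
      Complex.cpow_neg_one]
    exact inv_mul_cancel₀ hz0
  have h4 : z ^ (a - 1) * z ^ b * z ^ 2 = 1 := by
    rw [← Complex.cpow_add _ _ hz0, show a - 1 + b = (-2 : ℂ) by rw [ha, hb]; ring]
    exact hm2
  have h5 : z ^ a * z ^ (b - 1) * z ^ 2 = 1 := by
    rw [← Complex.cpow_add _ _ hz0, show a + (b - 1) = (-2 : ℂ) by rw [ha, hb]; ring]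
    exact hm2
  have hKc : K = c₁ * c₂ := by
    rw [hK, hc₁, hc₂]
    field_simp
    ring
  have key : z ^ 2 * (D z * deriv C z - C z * deriv D z)
      = -(μ : ℂ) * (c₁ * c₂) * (f₁ z * g₁ z)
        + (c₁ * c₂) * z * (deriv f₁ z * g₁ z - f₁ z * deriv g₁ z) := by
    rw [hC z, hD z, hCz, hDz]
    rw [ha, hb] at h3 h4 h5 ⊢
    linear_combination
      (c₁ * c₂ * (((-1 - (μ : ℂ)) / 2) * (f₁ z * g₁ z))) * h4
      + (c₁ * c₂ * z * (deriv f₁ z * g₁ z - f₁ z * deriv g₁ z)) * h3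
      - (c₁ * c₂ * ((((μ : ℂ) - 1) / 2) * (f₁ z * g₁ z))) * h5
  rw [key, hKc]
  field_simp [hz0]
  ring
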